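/- Let (S_1, …, S_{N+1}) be a random vector with values in ℝ ∪ {∞} whose joint law is invariant under every permutation of the coordinates, and let 1 ≤ k ≤ N+1. Let Q denote the k-th smallest value of the full sample {S_1, …, S_{N+1}} (a random variable, since the order statistic is a symmetric measurable function of the sample). Then P(S_{N+1} ≤ Q) ≥ k/(N+1). -/

import Mathlib

open MeasureTheory

/-- A random vector `S = (S_1, …, S_n)` on a probability space is *exchangeable* if its
joint law (the pushforward measure on the product space) is invariant under every
permutation of the coordinates. -/
def Exchangeable {Ω : Type*} [MeasurableSpace Ω] {E : Type*} [MeasurableSpace E] {n : ℕ}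
    (P : Measure Ω) (Z : Ω → Fin n → E) : Prop :=
  ∀ σ : Equiv.Perm (Fin n), Measure.map (fun ω => Z ω ∘ σ) P = Measure.map Z P

/-- The `k`-th smallest value (k-th order statistic, `1 ≤ k ≤ n`) of the multiset
`{s 1, …, s n}` of extended-real values: the entry at position `k` (counted with
multiplicity) when the values are sorted in nondecreasing order. -/
noncomputable def orderStat {n : ℕ} (s : Fin n → EReal) (k : ℕ) : EReal :=
  ((Multiset.map s Finset.univ.val).sort (· ≤ ·)).getD (k - 1) ⊤

section Aux

variable {n : ℕ}

lemma card_filter_eq_countP (s : Fin n → EReal) (p : EReal → Prop) [DecidablePred p] :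
    (Finset.univ.filter fun i => p (s i)).card
      = Multiset.countP p (Multiset.map s Finset.univ.val) := by
  rw [Multiset.countP_map]
  rfl

lemma le_card_le_orderStat (s : Fin n → EReal) (k : ℕ) (hk1 : 1 ≤ k) (hk2 : k ≤ n) :
    k ≤ (Finset.univ.filter fun i => s i ≤ orderStat s k).card := by
  classical
  set m := Multiset.map s Finset.univ.val with hm
  set l := m.sort (· ≤ ·) with hl
  have hlen : l.length = n := by
    rw [hl, Multiset.length_sort, hm, Multiset.card_map]; simp
  have hkl : k - 1 < l.length := by omega
  have hsorted : List.Pairwise (· ≤ ·) l := Multiset.pairwise_sort _ _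
  have hq : orderStat s k = l.get ⟨k - 1, hkl⟩ := by
    rw [orderStat, List.getD_eq_getElem]
    rfl
  rw [card_filter_eq_countP s (fun a => a ≤ orderStat s k), ← hm,
    show m = (l : Multiset EReal) from (Multiset.sort_eq _ _).symm, Multiset.coe_countP]
  have htake : List.countP (fun a => decide (a ≤ orderStat s k)) (l.take k) = (l.take k).length := by
    rw [List.countP_eq_length]
    intro a ha
    rw [List.mem_iff_getElem] at ha
    obtain ⟨i, hi, rfl⟩ := ha
    simp only [List.length_take, lt_min_iff] at hi
    rw [List.getElem_take]
    simp only [decide_eq_true_eq, hq]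
    exact hsorted.rel_get_of_le (a := ⟨i, by omega⟩) (b := ⟨k - 1, hkl⟩) (by simp; omega)
  have hlen_take : (l.take k).length = k := by simp [hlen]; omega
  calc k = List.countP (fun a => decide (a ≤ orderStat s k)) (l.take k) := by rw [htake, hlen_take]
    _ ≤ _ := (List.take_sublist k l).countP_le

lemma card_lt_orderStat_lt (s : Fin n → EReal) (k : ℕ) (hk1 : 1 ≤ k) (hk2 : k ≤ n) :
    (Finset.univ.filter fun i => s i < orderStat s k).card < k := by
  classical
  set m := Multiset.map s Finset.univ.val with hm
  set l := m.sort (· ≤ ·) with hl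
  have hlen : l.length = n := by
    rw [hl, Multiset.length_sort, hm, Multiset.card_map]; simp
  have hkl : k - 1 < l.length := by omega
  have hsorted : List.Pairwise (· ≤ ·) l := Multiset.pairwise_sort _ _
  have hq : orderStat s k = l.get ⟨k - 1, hkl⟩ := by
    rw [orderStat, List.getD_eq_getElem]
    rfl
  rw [card_filter_eq_countP s (fun a => a < orderStat s k), ← hm,
    show m = (l : Multiset EReal) from (Multiset.sort_eq _ _).symm, Multiset.coe_countP]
  have hdrop : List.countP (fun a => decide (a < orderStat s k)) (l.drop (k - 1)) = 0 := by
    rw [List.countP_eq_zero]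
    intro a ha
    rw [List.mem_iff_getElem] at ha
    obtain ⟨i, hi, rfl⟩ := ha
    simp only [List.length_drop] at hi
    rw [List.getElem_drop]
    simp only [decide_eq_true_eq, hq, not_lt]
    exact hsorted.rel_get_of_le (a := ⟨k - 1, hkl⟩) (b := ⟨k - 1 + i, by omega⟩) (by simp)
  calc List.countP (fun a => decide (a < orderStat s k)) l
      = List.countP _ (l.take (k-1) ++ l.drop (k-1)) := by rw [List.take_append_drop]
    _ = List.countP _ (l.take (k-1)) + List.countP _ (l.drop (k-1)) := List.countP_append
    _ ≤ (l.take (k-1)).length + 0 := by rw [hdrop]; exact Nat.add_le_add_right List.countP_le_length 0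
    _ < k := by simp [hlen]; omega

lemma orderStat_eq_infSup (s : Fin n → EReal) (k : ℕ) (hk1 : 1 ≤ k) (hk2 : k ≤ n) :
    orderStat s k = (Finset.univ.powersetCard k).inf fun A => A.sup s := by
  apply le_antisymm
  · apply Finset.le_inf
    intro A hA
    rw [Finset.mem_powersetCard] at hA
    by_contra h
    push_neg at h
    have hsub : A ⊆ Finset.univ.filter fun i => s i < orderStat s k := by
      intro i hi
      simp only [Finset.mem_filter, Finset.mem_univ, true_and]
      exact lt_of_le_of_lt (Finset.le_sup hi) h
    have h1 := Finset.card_le_card hsub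
    have h2 := card_lt_orderStat_lt s k hk1 hk2
    omega
  · obtain ⟨A, hAsub, hAcard⟩ := Finset.exists_subset_card_eq (le_card_le_orderStat s k hk1 hk2)
    refine le_trans (Finset.inf_le (show A ∈ Finset.univ.powersetCard k by
      rw [Finset.mem_powersetCard]; exact ⟨Finset.subset_univ A, hAcard⟩)) ?_
    apply Finset.sup_le
    intro i hi
    have := hAsub hi
    simp only [Finset.mem_filter] at this
    exact this.2

lemma measurable_finsetSup (J : Finset (Fin n)) :
    Measurable fun s : Fin n → EReal => J.sup s := by
  induction J using Finset.cons_induction with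
  | empty => simpa using measurable_const
  | cons a J ha ih =>
    simp only [Finset.sup_cons]
    exact (measurable_pi_apply a).max ih

lemma measurable_orderStat (k : ℕ) (hk1 : 1 ≤ k) (hk2 : k ≤ n) :
    Measurable fun s : Fin n → EReal => orderStat s k := by
  have h : (fun s : Fin n → EReal => orderStat s k)
      = fun s => (Finset.univ.powersetCard k).inf fun A => A.sup s :=
    funext fun s => orderStat_eq_infSup s k hk1 hk2
  rw [h]
  generalize (Finset.univ.powersetCard k : Finset (Finset (Fin n))) = J
  induction J using Finset.cons_induction with
  | empty => simpa using measurable_const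
  | cons A J hA ih =>
    simp only [Finset.inf_cons]
    exact (measurable_finsetSup A).min ih

lemma orderStat_comp_perm (s : Fin n → EReal) (σ : Equiv.Perm (Fin n)) (k : ℕ) :
    orderStat (s ∘ σ) k = orderStat s k := by
  unfold orderStat
  have : Multiset.map (s ∘ σ) Finset.univ.val = Multiset.map s Finset.univ.val := by
    rw [← Multiset.map_map]
    congr 1
    have h := Finset.map_univ_equiv σ
    calc Multiset.map (⇑σ) Finset.univ.val = (Finset.univ.map σ.toEmbedding).val := by
          rw [Finset.map_val]; rfl
      _ = Finset.univ.val := by rw [h]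
  rw [this]

end Aux

/-- Let `(S_1, …, S_{N+1})` be an exchangeable random vector of
extended-real scores and `1 ≤ k ≤ N+1`. Let `Q` be the `k`-th smallest value of the
full sample `{S_1, …, S_{N+1}}`. Then `P(S_{N+1} ≤ Q) ≥ k / (N+1)`. -/
theorem exchangeable_orderStat_coverage {Ω : Type*} [MeasurableSpace Ω]
    (P : Measure Ω) [IsProbabilityMeasure P] (N : ℕ)
    (S : Ω → Fin (N + 1) → EReal) (hS : Measurable S)
    (hexch : Exchangeable P S)
    (k : ℕ) (hk1 : 1 ≤ k) (hk2 : k ≤ N + 1) :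
    (k : ENNReal) / ((N : ENNReal) + 1) ≤
      P {ω | S ω (Fin.last N) ≤ orderStat (S ω) k} := by
  classical
  have hQmeas : Measurable fun x : Fin (N + 1) → EReal => orderStat x k :=
    measurable_orderStat k hk1 hk2
  set T : Fin (N + 1) → Set (Fin (N + 1) → EReal) :=
    fun i => {x | x i ≤ orderStat x k} with hT
  have hTmeas : ∀ i, MeasurableSet (T i) :=
    fun i => measurableSet_le (measurable_pi_apply i) hQmeas
  set A : Fin (N + 1) → Set Ω := fun i => S ⁻¹' T i with hA
  have hAmeas : ∀ i, MeasurableSet (A i) := fun i => hS (hTmeas i)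
  have hPA : ∀ i, P (A i) = P (A (Fin.last N)) := by
    intro i
    set σ : Equiv.Perm (Fin (N + 1)) := Equiv.swap i (Fin.last N) with hσ
    have hσmeas : Measurable fun ω => S ω ∘ σ :=
      measurable_pi_lambda _ fun j => (measurable_pi_apply (σ j)).comp hS
    have h1 : (fun ω => S ω ∘ σ) ⁻¹' T (Fin.last N) = A i := by
      ext ω
      simp only [Set.mem_preimage, hT, Set.mem_setOf_eq, Function.comp_apply, hA]
      rw [orderStat_comp_perm, hσ, Equiv.swap_apply_right]
    calc P (A i) = Measure.map (fun ω => S ω ∘ σ) P (T (Fin.last N)) := by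
          rw [Measure.map_apply hσmeas (hTmeas _), h1]
      _ = Measure.map S P (T (Fin.last N)) := by rw [hexch σ]
      _ = P (A (Fin.last N)) := Measure.map_apply hS (hTmeas _)
  have hsum : (k : ENNReal) ≤ ∑ i : Fin (N + 1), P (A i) := by
    have hpt : ∀ ω, (k : ENNReal)
        ≤ ∑ i : Fin (N + 1), (A i).indicator (fun _ => (1 : ENNReal)) ω := by
      intro ω
      have hcard := le_card_le_orderStat (S ω) k hk1 hk2
      calc (k : ENNReal)
          ≤ ((Finset.univ.filter fun i => S ω i ≤ orderStat (S ω) k).card : ENNReal) := by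
            exact_mod_cast hcard
        _ = ∑ i : Fin (N + 1), (A i).indicator (fun _ => (1 : ENNReal)) ω := by
            rw [Finset.card_filter]
            push_cast
            apply Finset.sum_congr rfl
            intro i _
            by_cases h : S ω i ≤ orderStat (S ω) k <;>
              simp [h, Set.indicator, hA, hT]
    calc (k : ENNReal) = ∫⁻ _, (k : ENNReal) ∂P := by simp
      _ ≤ ∫⁻ ω, ∑ i, (A i).indicator (fun _ => (1 : ENNReal)) ω ∂P := lintegral_mono hpt
      _ = ∑ i, ∫⁻ ω, (A i).indicator (fun _ => (1 : ENNReal)) ω ∂P :=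
          lintegral_finset_sum _ fun i _ => measurable_const.indicator (hAmeas i)
      _ = ∑ i, P (A i) := by
          refine Finset.sum_congr rfl fun i _ => ?_
          rw [lintegral_indicator (hAmeas i)]
          simp
  have hsum' : ∑ i : Fin (N + 1), P (A i) = ((N : ENNReal) + 1) * P (A (Fin.last N)) := by
    rw [Finset.sum_congr rfl fun i _ => hPA i, Finset.sum_const, Finset.card_univ,
      Fintype.card_fin, nsmul_eq_mul]
    push_cast
    ring
  rw [ENNReal.div_le_iff (by simp) (by simp)]
  calc (k : ENNReal) ≤ ∑ i : Fin (N + 1), P (A i) := hsum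
    _ = P (A (Fin.last N)) * ((N : ENNReal) + 1) := by rw [hsum']; ring
    _ = P {ω | S ω (Fin.last N) ≤ orderStat (S ω) k} * ((N : ENNReal) + 1) := rfl
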